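/- Let d ≤ n be natural numbers and let A ⊆ 2^[n] be a family of subsets of [n]. If VC-dim(A △ A) ≤ d, where A △ A = {S △ T : S, T ∈ A} and △ denotes symmetric difference, then |A| ≤ 2·C(n, ≤ ⌊d/2⌋). -/

import Mathlib

open Finset

variable {α : Type*} [DecidableEq α]

/-- Interpolation: on a family whose shattered sets all have size `≤ d`, every
`ZMod 2`-valued function is a polynomial of degree `≤ d` (written in the monomial basis
`S ↦ [S ⊆ b]`). -/
lemma interp (u : Finset α) : ∀ (d : ℕ) (B : Finset (Finset α)) (F : Finset α → ZMod 2),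
    (∀ b ∈ B, b ⊆ u) → (∀ Y, B.Shatters Y → Y.card ≤ d) →
    ∃ c : Finset α → ZMod 2, (∀ S, c S ≠ 0 → S.card ≤ d ∧ S ⊆ u) ∧
      ∀ b ∈ B, ∑ S ∈ b.powerset, c S = F b := by
  induction u using Finset.induction_on with
  | empty =>
    intro d B F hmem _
    refine ⟨fun S => if S = ∅ then F ∅ else 0, ?_, ?_⟩
    · intro S hS
      have : S = ∅ := by by_contra h; simp [h] at hS
      simp [this]
    · intro b hb
      have hb0 : b = ∅ := subset_empty.1 (hmem b hb)
      subst hb0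
      simp
  | @insert i u hiu IH =>
    intro d B F hmem hsh
    set B₀ : Finset (Finset α) := B.filter (fun b => i ∉ b) with hB₀
    set B₁ : Finset (Finset α) := (B.filter (fun b => i ∈ b)).image (fun b => b.erase i) with hB₁
    set C : Finset (Finset α) := B₀ ∩ B₁ with hC
    have hB₀B : ∀ b ∈ B₀, b ∈ B ∧ i ∉ b := by
      intro b hb; simpa [hB₀] using hb
    have hB₁B : ∀ b ∈ B₁, i ∉ b ∧ insert i b ∈ B := by
      intro b hb
      simp only [hB₁, mem_image, mem_filter] at hb
      obtain ⟨x, ⟨hxB, hix⟩, rfl⟩ := hb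
      exact ⟨notMem_erase _ _, by rwa [insert_erase hix]⟩
    have hmem01 : ∀ b ∈ B₀ ∪ B₁, b ⊆ u := by
      intro b hb
      rcases mem_union.1 hb with hb | hb
      · obtain ⟨hbB, hib⟩ := hB₀B b hb
        intro x hx
        rcases mem_insert.1 (hmem b hbB hx) with rfl | hxu
        · exact absurd hx hib
        · exact hxu
      · obtain ⟨hib, hbB⟩ := hB₁B b hb
        intro x hx
        have hxi : x ∈ insert i u := hmem _ hbB (mem_insert_of_mem hx)
        rcases mem_insert.1 hxi with rfl | hxu
        · exact absurd hx hib
        · exact hxu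
    -- shatter bound for B₀ ∪ B₁
    have hsh01 : ∀ Y, (B₀ ∪ B₁).Shatters Y → Y.card ≤ d := by
      intro Y hY
      refine hsh Y ?_
      intro t ht
      obtain ⟨m, hm, hYm⟩ := hY ht
      rcases mem_union.1 hm with hm | hm
      · exact ⟨m, (hB₀B m hm).1, hYm⟩
      · obtain ⟨him, hmB⟩ := hB₁B m hm
        have hYu : Y ⊆ u := by
          obtain ⟨m', hm', hYm'⟩ := hY (Subset.refl Y)
          rw [inter_eq_left] at hYm'
          exact hYm'.trans (hmem01 m' hm')
        have hiY : i ∉ Y := fun h => hiu (hYu h)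
        refine ⟨insert i m, hmB, ?_⟩
        rw [inter_insert_of_notMem hiY, hYm]
    -- the H coefficients on C
    have hCH : ∃ H : Finset α → ZMod 2, (∀ S, H S ≠ 0 → S.card + 1 ≤ d ∧ S ⊆ u) ∧
        ∀ x ∈ C, ∑ S ∈ x.powerset, H S = F (insert i x) + F x := by
      rcases eq_or_ne C ∅ with hCe | hCne
      · exact ⟨0, fun S hS => absurd rfl hS, by simp [hCe]⟩
      · have hCsh : ∀ Y, C.Shatters Y → Y.card ≤ d - 1 := by
          intro Y hY
          have hYu : Y ⊆ u := by
            obtain ⟨m', hm', hYm'⟩ := hY (Subset.refl Y)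
            rw [inter_eq_left] at hYm'
            exact hYm'.trans (hmem01 m' (mem_union_left _ (mem_of_mem_inter_left hm')))
          have hiY : i ∉ Y := fun h => hiu (hYu h)
          have hBsh : B.Shatters (insert i Y) := by
            intro t ht
            by_cases hit : i ∈ t
            · have ht' : t.erase i ⊆ Y := by
                intro x hx
                obtain ⟨hxi, hxt⟩ := mem_erase.1 hx
                rcases mem_insert.1 (ht hxt) with rfl | h
                · exact absurd rfl hxi
                · exact h
              obtain ⟨m, hmC, hYm⟩ := hY ht'
              obtain ⟨him, hmB⟩ := hB₁B m (mem_of_mem_inter_right hmC)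
              refine ⟨insert i m, hmB, ?_⟩
              rw [insert_inter_of_mem (mem_insert_self i m), inter_insert_of_notMem hiY, hYm,
                insert_erase hit]
            · have ht' : t ⊆ Y := fun x hx => by
                rcases mem_insert.1 (ht hx) with rfl | h
                · exact absurd hx hit
                · exact h
              obtain ⟨m, hmC, hYm⟩ := hY ht'
              obtain ⟨hmB, him⟩ := hB₀B m (mem_of_mem_inter_left hmC)
              refine ⟨m, hmB, ?_⟩
              rw [insert_inter_of_notMem him, hYm]
          have h1 : (insert i Y).card ≤ d := hsh _ hBsh
          rw [card_insert_of_notMem hiY] at h1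
          omega
        obtain ⟨H, hHsupp, hHsum⟩ := IH (d - 1) C
            (fun x => F (insert i x) + F x)
            (fun b hb => hmem01 b (mem_union_left _ (mem_of_mem_inter_left hb))) hCsh
        have hd1 : 1 ≤ d := by
          obtain ⟨x, hx⟩ := nonempty_iff_ne_empty.2 hCne
          obtain ⟨hx0, hx1⟩ := mem_inter.1 hx
          have hBsh : B.Shatters ({i} : Finset α) := by
            intro t ht
            rcases subset_singleton_iff.1 ht with rfl | rfl
            · exact ⟨x, (hB₀B x hx0).1, by
                rw [singleton_inter_of_notMem (hB₀B x hx0).2]⟩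
            · exact ⟨insert i x, (hB₁B x hx1).2, by
                rw [singleton_inter_of_mem (mem_insert_self i x)]⟩
          simpa using hsh _ hBsh
        exact ⟨H, fun S hS => ⟨by have := (hHsupp S hS).1; omega, (hHsupp S hS).2⟩, hHsum⟩
    obtain ⟨H, hHsupp, hHsum⟩ := hCH
    -- target function for G
    obtain ⟨G, hGsupp, hGsum⟩ := IH d (B₀ ∪ B₁)
      (fun x => if x ∈ B₀ then F x else F (insert i x) + ∑ S ∈ x.powerset, H S)
      hmem01 hsh01
    refine ⟨fun S => if i ∈ S then H (S.erase i) else G S, ?_, ?_⟩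
    · intro S hS
      replace hS : (if i ∈ S then H (S.erase i) else G S) ≠ 0 := hS
      by_cases hiS : i ∈ S
      · rw [if_pos hiS] at hS
        obtain ⟨h1, h2⟩ := hHsupp _ hS
        constructor
        · rwa [← card_erase_add_one hiS]
        · intro x hx
          rcases eq_or_ne x i with rfl | hxi
          · exact mem_insert_self _ _
          · exact mem_insert_of_mem (h2 (mem_erase.2 ⟨hxi, hx⟩))
      · rw [if_neg hiS] at hS
        obtain ⟨h1, h2⟩ := hGsupp _ hS
        exact ⟨h1, h2.trans (subset_insert _ _)⟩
    · intro b hb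
      by_cases hib : i ∈ b
      · set b' := b.erase i with hb'
        have hib' : i ∉ b' := notMem_erase _ _
        have hbins : b = insert i b' := (insert_erase hib).symm
        have hb'B₁ : b' ∈ B₁ := mem_image.2 ⟨b, mem_filter.2 ⟨hb, hib⟩, rfl⟩
        rw [hbins, Finset.sum_powerset_insert hib']
        have e1 : ∑ S ∈ b'.powerset, (if i ∈ S then H (S.erase i) else G S) =
            ∑ S ∈ b'.powerset, G S := by
          refine sum_congr rfl fun S hS => ?_
          have : i ∉ S := fun h => hib' (mem_powerset.1 hS h)
          rw [if_neg this]
        have e2 : ∑ S ∈ b'.powerset, (if i ∈ insert i S then H ((insert i S).erase i) else G (insert i S)) =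
            ∑ S ∈ b'.powerset, H S := by
          refine sum_congr rfl fun S hS => ?_
          have hiS : i ∉ S := fun h => hib' (mem_powerset.1 hS h)
          rw [if_pos (mem_insert_self _ _), erase_insert hiS]
        rw [e1, e2, hGsum b' (mem_union_right _ hb'B₁)]
        by_cases hb'0 : b' ∈ B₀
        · rw [if_pos hb'0, hHsum b' (mem_inter.2 ⟨hb'0, hb'B₁⟩)]
          have : ∀ x y : ZMod 2, x + (y + x) = y := by decide
          exact this _ _
        · rw [if_neg hb'0]
          have : ∀ x y : ZMod 2, (x + y) + y = x := by decide
          exact this _ _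
      · have hbB₀ : b ∈ B₀ := mem_filter.2 ⟨hb, hib⟩
        have e1 : ∑ S ∈ b.powerset, (if i ∈ S then H (S.erase i) else G S) =
            ∑ S ∈ b.powerset, G S := by
          refine sum_congr rfl fun S hS => ?_
          have : i ∉ S := fun h => hib (mem_powerset.1 hS h)
          rw [if_neg this]
        rw [e1, hGsum b (mem_union_left _ hbB₀), if_pos hbB₀]

section Main
variable {n : ℕ}

private lemma e_prod (T x : Finset (Fin n)) :
    (if T ⊆ x then (1 : ZMod 2) else 0) = ∏ j ∈ T, (if j ∈ x then (1 : ZMod 2) else 0) := by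
  by_cases h : T ⊆ x
  · rw [if_pos h, eq_comm]
    exact prod_eq_one fun j hj => if_pos (h hj)
  · rw [if_neg h, eq_comm]
    obtain ⟨j, hjT, hjx⟩ := not_subset.1 h
    exact prod_eq_zero hjT (if_neg hjx)

private lemma sum_powerset_to_univ (x : Finset (Fin n)) (f : Finset (Fin n) → ZMod 2) :
    ∑ T ∈ x.powerset, f T = ∑ T ∈ univ, if T ⊆ x then f T else 0 := by
  rw [← Finset.sum_filter]
  congr 1
  ext S
  simp [mem_powerset]

end Main

/-- **A Sauer–Shelah–Perles Lemma for sumsets.**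
If the family `A △ A = {S △ T : S, T ∈ A}` of symmetric differences has
VC dimension at most `d`, then `|A| ≤ 2 · C(n, ≤ ⌊d/2⌋)`. -/
theorem sauer_shelah_perles_for_sumsets (n d : ℕ) (hdn : d ≤ n)
    (A : Finset (Finset (Fin n)))
    (hvc : (Finset.image₂ symmDiff A A).vcDim ≤ d) :
    A.card ≤ 2 * ∑ i ∈ Finset.range (d / 2 + 1), n.choose i := by
  classical
  set k := d / 2 with hk
  set B := Finset.image₂ symmDiff A A with hB
  have hshB : ∀ Y, B.Shatters Y → Y.card ≤ d := fun Y h => h.card_le_vcDim.trans hvc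
  obtain ⟨c, hcsupp, hcsum⟩ := interp (univ : Finset (Fin n)) d B
    (fun x => if x = ∅ then 1 else 0) (fun b _ => subset_univ b) hshB
  have hc2 : ∀ S : Finset (Fin n), d < S.card → c S = 0 := by
    intro S hS
    by_contra h
    exact absurd (hcsupp S h).1 (not_le.2 hS)
  have hd2k : d ≤ 2 * k + 1 := by omega
  set e : Finset (Fin n) → Finset (Fin n) → ZMod 2 :=
    fun T x => if T ⊆ x then 1 else 0 with he
  set g : Finset (Fin n) → Finset (Fin n) → ZMod 2 :=
    fun T b => ∑ S ∈ univ, if T ⊆ S then c S * e (S \ T) b else 0 with hg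
  set h : Finset (Fin n) → Finset (Fin n) → ZMod 2 :=
    fun U a => ∑ S ∈ univ, if U ⊆ S ∧ k < (S \ U).card then c S * e (S \ U) a else 0 with hh
  set I : Finset (Finset (Fin n)) := univ.filter (fun S => S.card ≤ k) with hI
  have key : ∀ a ∈ A, ∀ b ∈ A,
      (∑ T ∈ I, e T a * g T b) + (∑ U ∈ I, h U a * e U b) = if a = b then 1 else 0 := by
    intro a ha b hb
    have hab : symmDiff a b ∈ B := mem_image₂_of_mem ha hb
    have h0 : (if a = b then (1 : ZMod 2) else 0) = ∑ S ∈ (symmDiff a b).powerset, c S := by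
      rw [hcsum _ hab]
      have : symmDiff a b = ∅ ↔ a = b := by rw [← Finset.bot_eq_empty, symmDiff_eq_bot]
      by_cases hab' : a = b
      · rw [if_pos hab', if_pos (this.2 hab')]
      · rw [if_neg hab', if_neg (fun hc => hab' (this.1 hc))]
    have h2 : ∀ S : Finset (Fin n),
        (if S ⊆ symmDiff a b then c S else 0) =
          ∑ T ∈ S.powerset, c S * (e T a * e (S \ T) b) := by
      intro S
      have expand : (if S ⊆ symmDiff a b then (1 : ZMod 2) else 0) =
          ∑ T ∈ S.powerset, e T a * e (S \ T) b := by
        rw [e_prod]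
        have factor : ∀ j ∈ S, (if j ∈ symmDiff a b then (1 : ZMod 2) else 0) =
            (if j ∈ a then (1 : ZMod 2) else 0) + (if j ∈ b then 1 else 0) := by
          intro j _
          by_cases h1 : j ∈ a <;> by_cases h2 : j ∈ b <;>
            simp [Finset.mem_symmDiff, h1, h2] <;> decide
        rw [Finset.prod_congr rfl factor, Finset.prod_add]
        exact Finset.sum_congr rfl fun T _ => by rw [he]; dsimp only; rw [e_prod, e_prod]
      calc (if S ⊆ symmDiff a b then c S else 0)
          = c S * (if S ⊆ symmDiff a b then 1 else 0) := by
            by_cases hS : S ⊆ symmDiff a b <;> simp [hS]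
        _ = ∑ T ∈ S.powerset, c S * (e T a * e (S \ T) b) := by
            rw [expand, Finset.mul_sum]
    have hmain : (if a = b then (1 : ZMod 2) else 0) =
        ∑ S ∈ univ, ∑ T ∈ S.powerset, c S * (e T a * e (S \ T) b) := by
      rw [h0, sum_powerset_to_univ]
      exact Finset.sum_congr rfl fun S _ => h2 S
    -- split each term by whether T.card ≤ k
    have split : ∀ (p : Prop) [Decidable p] (x : ZMod 2),
        x = (if p then x else 0) + (if ¬ p then x else 0) := by
      intro p _ x
      by_cases hp : p <;> simp [hp]
    have hsplit : (if a = b then (1 : ZMod 2) else 0) =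
        (∑ S ∈ univ, ∑ T ∈ S.powerset,
          if T.card ≤ k then c S * (e T a * e (S \ T) b) else 0) +
        (∑ S ∈ univ, ∑ T ∈ S.powerset,
          if ¬ T.card ≤ k then c S * (e T a * e (S \ T) b) else 0) := by
      rw [hmain, ← Finset.sum_add_distrib]
      refine Finset.sum_congr rfl fun S _ => ?_
      rw [← Finset.sum_add_distrib]
      exact Finset.sum_congr rfl fun T _ => split _ _
    -- Left part
    have hleft : (∑ S ∈ univ, ∑ T ∈ S.powerset,
          if T.card ≤ k then c S * (e T a * e (S \ T) b) else 0) =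
        ∑ T ∈ I, e T a * g T b := by
      have e1 : ∀ S : Finset (Fin n), (∑ T ∈ S.powerset,
          if T.card ≤ k then c S * (e T a * e (S \ T) b) else 0) =
          ∑ T ∈ univ, if T ⊆ S then (if T.card ≤ k then c S * (e T a * e (S \ T) b) else 0) else 0 :=
        fun S => sum_powerset_to_univ S _
      rw [Finset.sum_congr rfl fun S _ => e1 S, Finset.sum_comm]
      rw [hI, Finset.sum_filter]
      refine Finset.sum_congr rfl fun T _ => ?_
      by_cases hT : T.card ≤ k
      · simp only [hT, if_true]
        rw [hg]; dsimp only
        rw [Finset.mul_sum]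
        refine Finset.sum_congr rfl fun S _ => ?_
        by_cases hTS : T ⊆ S
        · simp only [hTS, if_true]; ring
        · simp [hTS]
      · simp [hT]
    -- Right part
    have hright : (∑ S ∈ univ, ∑ T ∈ S.powerset,
          if ¬ T.card ≤ k then c S * (e T a * e (S \ T) b) else 0) =
        ∑ U ∈ I, h U a * e U b := by
      -- reflect T ↦ S \ T inside each S
      have e1 : ∀ S : Finset (Fin n), (∑ T ∈ S.powerset,
          if ¬ T.card ≤ k then c S * (e T a * e (S \ T) b) else 0) =
          ∑ U ∈ S.powerset,
            if U ⊆ S ∧ k < (S \ U).card then c S * (e (S \ U) a * e U b) else 0 := by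
        intro S
        refine Finset.sum_bij' (fun T _ => S \ T) (fun U _ => S \ U)
          (fun T hT => mem_powerset.2 (sdiff_subset)) (fun U hU => mem_powerset.2 (sdiff_subset))
          (fun T hT => Finset.sdiff_sdiff_eq_self (mem_powerset.1 hT))
          (fun U hU => Finset.sdiff_sdiff_eq_self (mem_powerset.1 hU)) ?_
        intro T hT
        have hTS : T ⊆ S := mem_powerset.1 hT
        rw [Finset.sdiff_sdiff_eq_self hTS]
        by_cases hcard : T.card ≤ k
        · rw [if_neg (by simpa using hcard), if_neg (by rintro ⟨-, hlt⟩; omega)]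
        · rw [if_pos (by simpa using hcard), if_pos ⟨sdiff_subset, not_le.1 hcard⟩]
      rw [Finset.sum_congr rfl fun S _ => e1 S]
      have e2 : ∀ S : Finset (Fin n), (∑ U ∈ S.powerset,
          if U ⊆ S ∧ k < (S \ U).card then c S * (e (S \ U) a * e U b) else 0) =
          ∑ U ∈ univ, if U ⊆ S then
            (if U ⊆ S ∧ k < (S \ U).card then c S * (e (S \ U) a * e U b) else 0) else 0 :=
        fun S => sum_powerset_to_univ S _
      rw [Finset.sum_congr rfl fun S _ => e2 S, Finset.sum_comm]
      have e3 : ∀ U : Finset (Fin n), (∑ S ∈ univ, if U ⊆ S then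
            (if U ⊆ S ∧ k < (S \ U).card then c S * (e (S \ U) a * e U b) else 0) else 0) =
          h U a * e U b := by
        intro U
        rw [hh]; dsimp only
        rw [Finset.sum_mul]
        refine Finset.sum_congr rfl fun S _ => ?_
        by_cases hc : U ⊆ S ∧ k < (S \ U).card
        · rw [if_pos hc.1, if_pos hc, if_pos hc]; ring
        · rw [if_neg hc]
          by_cases hUS : U ⊆ S
          · rw [if_pos hUS, if_neg hc, zero_mul]
          · rw [if_neg hUS, if_neg hc, zero_mul]
      rw [Finset.sum_congr rfl fun U _ => e3 U]
      symm
      refine Finset.sum_subset (subset_univ I) ?_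
      intro U _ hU
      have hUk : k < U.card := by
        rw [hI] at hU
        simpa using hU
      have : h U a = 0 := by
        rw [hh]; dsimp only
        refine Finset.sum_eq_zero fun S _ => ?_
        by_cases hc : U ⊆ S ∧ k < (S \ U).card
        · rw [if_pos hc]
          have hcardS : (S \ U).card + U.card = S.card := card_sdiff_add_card_eq_card hc.1
          have : d < S.card := by omega
          rw [hc2 S this, zero_mul]
        · rw [if_neg hc]
      rw [this, zero_mul]
    rw [hsplit, hleft, hright]
  -- cardinality of I
  have cardI : I.card = ∑ i ∈ Finset.range (k + 1), n.choose i := by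
    have hIb : I = (Finset.range (k + 1)).biUnion (fun j => Finset.powersetCard j univ) := by
      ext S
      simp only [hI, mem_filter, mem_univ, true_and, mem_biUnion, Finset.mem_range,
        mem_powersetCard_univ, Nat.lt_succ_iff]
      constructor
      · intro hS
        exact ⟨S.card, hS, rfl⟩
      · rintro ⟨j, hj, rfl⟩
        exact hj
    rw [hIb, Finset.card_biUnion]
    · refine Finset.sum_congr rfl fun j _ => ?_
      rw [Finset.card_powersetCard, Finset.card_univ, Fintype.card_fin]
    · intro x _ y _ hxy
      refine Finset.disjoint_left.2 fun S hSx hSy => ?_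
      rw [mem_powersetCard_univ] at hSx hSy
      exact hxy (hSx ▸ hSy)
  -- linear algebra
  set φ : ↥A → (↥I ⊕ ↥I) → ZMod 2 :=
    fun a => Sum.elim (fun T => e (T : Finset (Fin n)) (a : Finset (Fin n)))
      (fun U => h (U : Finset (Fin n)) (a : Finset (Fin n))) with hφ
  set ψ : ↥A → (↥I ⊕ ↥I) → ZMod 2 :=
    fun b => Sum.elim (fun T => g (T : Finset (Fin n)) (b : Finset (Fin n)))
      (fun U => e (U : Finset (Fin n)) (b : Finset (Fin n))) with hψ
  have pair : ∀ a b : ↥A, ∑ j : ↥I ⊕ ↥I, φ a j * ψ b j = if a = b then 1 else 0 := by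
    intro a b
    rw [Fintype.sum_sum_type]
    have h1 : ∑ T : ↥I, φ a (Sum.inl T) * ψ b (Sum.inl T) =
        ∑ T ∈ I, e T (a : Finset (Fin n)) * g T (b : Finset (Fin n)) := by
      rw [← Finset.sum_coe_sort I]
      rfl
    have h2 : ∑ U : ↥I, φ a (Sum.inr U) * ψ b (Sum.inr U) =
        ∑ U ∈ I, h U (a : Finset (Fin n)) * e U (b : Finset (Fin n)) := by
      rw [← Finset.sum_coe_sort I]
      rfl
    rw [h1, h2, key a a.2 b b.2]
    by_cases hab : a = b
    · rw [if_pos hab, if_pos (by rw [hab])]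
    · rw [if_neg hab, if_neg (fun hc => hab (Subtype.ext hc))]
  have li : LinearIndependent (ZMod 2) φ := by
    rw [Fintype.linearIndependent_iff]
    intro f hf x
    have h0 : ∀ j, ∑ y : ↥A, f y * φ y j = 0 := by
      intro j
      have := congrFun hf j
      simpa [Finset.sum_apply] using this
    have hswap : ∑ y : ↥A, f y * ∑ j : ↥I ⊕ ↥I, φ y j * ψ x j = 0 := by
      calc ∑ y : ↥A, f y * ∑ j : ↥I ⊕ ↥I, φ y j * ψ x j
          = ∑ y : ↥A, ∑ j : ↥I ⊕ ↥I, f y * φ y j * ψ x j := by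
            refine Finset.sum_congr rfl fun y _ => ?_
            rw [Finset.mul_sum]
            exact Finset.sum_congr rfl fun j _ => by ring
        _ = ∑ j : ↥I ⊕ ↥I, ∑ y : ↥A, f y * φ y j * ψ x j := Finset.sum_comm
        _ = ∑ j : ↥I ⊕ ↥I, (∑ y : ↥A, f y * φ y j) * ψ x j := by
            refine Finset.sum_congr rfl fun j _ => ?_
            rw [Finset.sum_mul]
        _ = 0 := Finset.sum_eq_zero fun j _ => by rw [h0 j, zero_mul]
    have hzero : ∑ y : ↥A, f y * (if y = x then (1 : ZMod 2) else 0) = 0 := by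
      calc ∑ y : ↥A, f y * (if y = x then (1 : ZMod 2) else 0)
          = ∑ y : ↥A, f y * ∑ j : ↥I ⊕ ↥I, φ y j * ψ x j :=
            Finset.sum_congr rfl fun y _ => by rw [pair y x]
        _ = 0 := hswap
    simpa [Finset.sum_ite_eq'] using hzero
  have hcard := li.fintype_card_le_finrank
  simp only [Module.finrank_fintype_fun_eq_card, Fintype.card_sum, Fintype.card_coe] at hcard
  calc A.card ≤ I.card + I.card := hcard
    _ = 2 * ∑ i ∈ Finset.range (d / 2 + 1), n.choose i := by rw [cardI, hk]; ring
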